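/- (Lipschitz continuity of the DD-SRad mapping.) The DD-SRad mapping φ : ℝ^d → ℝ^d satisfies ‖φ(u) − φ(û)‖₂ ≤ ‖δ‖₂ · ‖u − û‖₂ for all u, û ∈ ℝ^d, where ‖δ‖₂ = √(Σ_i (δⁱ)²) and ‖·‖₂ is the Euclidean norm on ℝ^d. -/

import Mathlib

/-- The squashing function `f(t) = t / √(1 + t²)`. -/
noncomputable def squash (t : ℝ) : ℝ := t / Real.sqrt (1 + t ^ 2)

/-- The per-dimension effective radius of DD-SRad. -/
noncomputable def Reff (δ amin amax aprev u : ℝ) : ℝ :=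
  if 0 < u then min δ (amax - aprev)
  else if u < 0 then min δ (aprev - amin)
  else δ

/-- The DD-SRad mapping `φ : ℝᵈ → ℝᵈ` on Euclidean space. -/
noncomputable def ddsrad {d : ℕ} (δ amin amax aprev : Fin d → ℝ)
    (u : EuclideanSpace ℝ (Fin d)) : EuclideanSpace ℝ (Fin d) :=
  WithLp.toLp 2 (fun i => aprev i + Reff (δ i) (amin i) (amax i) (aprev i) (u i) * squash (u i))

lemma sqrt_ge_one (t : ℝ) : 1 ≤ Real.sqrt (1 + t ^ 2) := by
  have : Real.sqrt 1 ≤ Real.sqrt (1 + t ^ 2) :=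
    Real.sqrt_le_sqrt (by nlinarith [sq_nonneg t])
  simpa using this

lemma squash_abs_le (t : ℝ) : |squash t| ≤ |t| := by
  have h1 := sqrt_ge_one t
  have h0 : 0 < Real.sqrt (1 + t ^ 2) := lt_of_lt_of_le one_pos h1
  rw [squash, abs_div, abs_of_pos h0]
  calc |t| / Real.sqrt (1 + t ^ 2) ≤ |t| / 1 := by
        apply div_le_div_of_nonneg_left (abs_nonneg t) one_pos h1
    _ = |t| := by ring

lemma squash_lipschitz (u v : ℝ) : |squash u - squash v| ≤ |u - v| := by
  have hsu : Real.sqrt (1 + u ^ 2) ^ 2 = 1 + u ^ 2 := Real.sq_sqrt (by positivity)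
  have hsv : Real.sqrt (1 + v ^ 2) ^ 2 = 1 + v ^ 2 := Real.sq_sqrt (by positivity)
  have h1u := sqrt_ge_one u
  have h1v := sqrt_ge_one v
  set su := Real.sqrt (1 + u ^ 2)
  set sv := Real.sqrt (1 + v ^ 2)
  have hsu0 : 0 < su := lt_of_lt_of_le one_pos h1u
  have hsv0 : 0 < sv := lt_of_lt_of_le one_pos h1v
  rw [squash, squash, div_sub_div _ _ (ne_of_gt hsu0) (ne_of_gt hsv0), abs_div,
    abs_of_pos (mul_pos hsu0 hsv0)]
  rw [div_le_iff₀ (mul_pos hsu0 hsv0)]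
  have key : (u * sv - su * v) ^ 2 ≤ (|u - v| * (su * sv)) ^ 2 := by
    have e : (su * sv) ^ 2 = (1 + u * v) ^ 2 + (u - v) ^ 2 := by
      have : (su * sv) ^ 2 = (1 + u ^ 2) * (1 + v ^ 2) := by
        rw [mul_pow, hsu, hsv]
      rw [this]; ring
    have hpos : su * sv > 0 := mul_pos hsu0 hsv0
    have hge : su * sv ≥ 1 + u * v := by
      nlinarith [sq_nonneg (u - v), sq_nonneg (su * sv - (1 + u*v))]
    have hle : su * sv ≤ (2 + u ^ 2 + v ^ 2) / 2 := by
      nlinarith [sq_nonneg (su - sv)]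
    have habs : (|u - v| * (su * sv)) ^ 2 = (u - v) ^ 2 * (su * sv) ^ 2 := by
      rw [mul_pow, sq_abs]
    rw [habs]
    rcases le_or_gt 0 (u * v) with h | h
    · nlinarith [sq_nonneg (u - v), sq_nonneg (u*v)]
    · nlinarith [sq_nonneg (u - v), sq_nonneg (u*v), sq_nonneg (u + v)]
  calc |u * sv - su * v| = Real.sqrt ((u * sv - su * v) ^ 2) := (Real.sqrt_sq_eq_abs _).symm
    _ ≤ Real.sqrt ((|u - v| * (su * sv)) ^ 2) := Real.sqrt_le_sqrt key
    _ = |u - v| * (su * sv) := by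
        rw [Real.sqrt_sq_eq_abs, abs_of_nonneg (by positivity)]

@[simp] lemma squash_zero : squash 0 = 0 := by simp [squash]

lemma squash_nonneg {t : ℝ} (h : 0 ≤ t) : 0 ≤ squash t :=
  div_nonneg h (Real.sqrt_nonneg _)

lemma squash_nonpos {t : ℝ} (h : t ≤ 0) : squash t ≤ 0 :=
  div_nonpos_of_nonpos_of_nonneg h (Real.sqrt_nonneg _)

lemma squash_le_self {t : ℝ} (h : 0 ≤ t) : squash t ≤ t := by
  have := squash_abs_le t
  rw [abs_of_nonneg h, abs_of_nonneg (squash_nonneg h)] at this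
  exact this

lemma self_le_squash {t : ℝ} (h : t ≤ 0) : t ≤ squash t := by
  have := squash_abs_le t
  rw [abs_of_nonpos h, abs_of_nonpos (squash_nonpos h)] at this
  linarith

lemma Reff_nonneg {δ amin amax aprev : ℝ} (hδ : 0 < δ) (h2 : amin ≤ aprev)
    (h3 : aprev ≤ amax) (u : ℝ) : 0 ≤ Reff δ amin amax aprev u := by
  unfold Reff; split_ifs <;>
    first
      | exact le_min (le_of_lt hδ) (by linarith)
      | exact le_of_lt hδ

lemma Reff_le {δ amin amax aprev : ℝ} (hδ : 0 < δ) (u : ℝ) :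
    Reff δ amin amax aprev u ≤ δ := by
  unfold Reff; split_ifs <;> simp [min_le_iff]

lemma key_cross {δ amin amax aprev : ℝ} (hδ : 0 < δ) (h2 : amin ≤ aprev)
    (h3 : aprev ≤ amax) {u v : ℝ} (hu : 0 ≤ u) (hv : v ≤ 0) :
    |Reff δ amin amax aprev u * squash u - Reff δ amin amax aprev v * squash v|
      ≤ δ * |u - v| := by
  have hru0 := Reff_nonneg hδ h2 h3 u
  have hrv0 := Reff_nonneg hδ h2 h3 v
  have hru1 := Reff_le (amin := amin) (amax := amax) (aprev := aprev) hδ u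
  have hrv1 := Reff_le (amin := amin) (amax := amax) (aprev := aprev) hδ v
  have hfu : 0 ≤ squash u := squash_nonneg hu
  have hfv : squash v ≤ 0 := squash_nonpos hv
  have h1 : squash u ≤ u := squash_le_self hu
  have h2' : v ≤ squash v := self_le_squash hv
  rw [abs_of_nonneg (by nlinarith), abs_of_nonneg (by linarith)]
  nlinarith [mul_le_mul_of_nonneg_left h1 (le_of_lt hδ),
    mul_le_mul_of_nonneg_right hru1 hfu,
    mul_le_mul_of_nonneg_left h2' (le_of_lt hδ)]

lemma key (δ amin amax aprev : ℝ) (hδ : 0 < δ) (h2 : amin ≤ aprev)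
    (h3 : aprev ≤ amax) (u v : ℝ) :
    |Reff δ amin amax aprev u * squash u - Reff δ amin amax aprev v * squash v|
      ≤ δ * |u - v| := by
  have same : ∀ r : ℝ, 0 ≤ r → r ≤ δ →
      |r * squash u - r * squash v| ≤ δ * |u - v| := by
    intro r hr0 hr1
    rw [← mul_sub, abs_mul, abs_of_nonneg hr0]
    exact mul_le_mul hr1 (squash_lipschitz u v) (abs_nonneg _) (le_of_lt hδ)
  have epos : ∀ t : ℝ, 0 ≤ t →
      Reff δ amin amax aprev t * squash t = min δ (amax - aprev) * squash t := by
    intro t ht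
    rcases eq_or_lt_of_le ht with h | h
    · simp [← h]
    · simp [Reff, h]
  have eneg : ∀ t : ℝ, t ≤ 0 →
      Reff δ amin amax aprev t * squash t = min δ (aprev - amin) * squash t := by
    intro t ht
    rcases eq_or_lt_of_le ht with h | h
    · simp [h]
    · simp [Reff, h, not_lt_of_gt h]
  rcases le_total 0 u with hu | hu <;> rcases le_total 0 v with hv | hv
  · rw [epos u hu, epos v hv]
    exact same _ (le_min (le_of_lt hδ) (by linarith)) (min_le_left _ _)
  · exact key_cross hδ h2 h3 hu hv
  · rw [abs_sub_comm, ← abs_neg (u - v), neg_sub]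
    exact key_cross hδ h2 h3 hv hu
  · rw [eneg u hu, eneg v hv]
    exact same _ (le_min (le_of_lt hδ) (by linarith)) (min_le_left _ _)

/-- Lipschitz continuity of the DD-SRad mapping:
`‖φ(u) − φ(û)‖₂ ≤ ‖δ‖₂ · ‖u − û‖₂` for all `u, û ∈ ℝᵈ`, where `‖δ‖₂ = √(Σᵢ (δⁱ)²)`. -/
theorem ddsrad_lipschitz (d : ℕ) (δ amin amax aprev : Fin d → ℝ)
    (hδ : ∀ i, 0 < δ i) (hbound : ∀ i, amin i ≤ amax i)
    (hprev : ∀ i, aprev i ∈ Set.Icc (amin i) (amax i))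
    (u v : EuclideanSpace ℝ (Fin d)) :
    ‖ddsrad δ amin amax aprev u - ddsrad δ amin amax aprev v‖
      ≤ Real.sqrt (∑ i, δ i ^ 2) * ‖u - v‖ := by
  have hkey : ∀ i, |(ddsrad δ amin amax aprev u - ddsrad δ amin amax aprev v) i|
      ≤ δ i * |u i - v i| := by
    intro i
    have : (ddsrad δ amin amax aprev u - ddsrad δ amin amax aprev v) i
        = Reff (δ i) (amin i) (amax i) (aprev i) (u i) * squash (u i)
          - Reff (δ i) (amin i) (amax i) (aprev i) (v i) * squash (v i) := by
      simp [ddsrad]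
    rw [this]
    exact key _ _ _ _ (hδ i) (hprev i).1 (hprev i).2 _ _
  rw [EuclideanSpace.norm_eq, EuclideanSpace.norm_eq, ← Real.sqrt_mul (by positivity),
    Finset.sum_mul]
  apply Real.sqrt_le_sqrt
  apply Finset.sum_le_sum
  intro i _
  have h1 : ‖(ddsrad δ amin amax aprev u - ddsrad δ amin amax aprev v) i‖ ^ 2
      ≤ (δ i) ^ 2 * |u i - v i| ^ 2 := by
    rw [Real.norm_eq_abs, ← mul_pow]
    exact pow_le_pow_left₀ (abs_nonneg _) (hkey i) 2
  have h2 : (δ i) ^ 2 ≤ ∑ j, δ j ^ 2 :=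
    Finset.single_le_sum (fun j _ => sq_nonneg (δ j)) (Finset.mem_univ i)
  have h4 : |u i - v i| ^ 2 ≤ ∑ j, ‖(u - v) j‖ ^ 2 := by
    have := Finset.single_le_sum (f := fun j => ‖(u - v) j‖ ^ 2)
      (fun j _ => sq_nonneg _) (Finset.mem_univ i)
    simpa [Real.norm_eq_abs] using this
  calc ‖(ddsrad δ amin amax aprev u - ddsrad δ amin amax aprev v) i‖ ^ 2
      ≤ (δ i) ^ 2 * |u i - v i| ^ 2 := h1
    _ ≤ (δ i) ^ 2 * ∑ j, ‖(u - v) j‖ ^ 2 :=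
        mul_le_mul_of_nonneg_left h4 (sq_nonneg _)
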